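/- Let X be a set of minimal L-structures and M a minimal L-structure. The following are equivalent: (1) qf(M) belongs to the closure of {qf(N) : N ∈ X} in the Stone topology on S_L; (2) M is isomorphic to the core (the substructure generated by the empty set) of some ultraproduct ∏_{i∈I} M_i / D of structures M_i ∈ X with respect to an ultrafilter D on I; (3) M embeds into some ultraproduct of structures from X. -/

import Mathlib

open FirstOrder FirstOrder.Language

universe u v

/-- An `L`-structure is *minimal* if it has no proper substructure; equivalently,
it is generated by the empty set. -/
def FirstOrder.Language.IsMinimal (L : FirstOrder.Language.{u, v}) (M : Type w) [L.Structure M] :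
    Prop :=
  Substructure.closure L (∅ : Set M) = ⊤

/-- `qf L M` is the quantifier-free theory of `M`: the set of quantifier-free
`L`-sentences true in `M`. -/
def FirstOrder.Language.qf (L : FirstOrder.Language.{u, v}) (M : Type w) [L.Structure M] :
    Set L.Sentence :=
  {φ : L.Sentence | BoundedFormula.IsQF φ ∧ M ⊨ φ}

/-- `SL L` is the set of isomorphism types of minimal `L`-structures, identified with
the quantifier-free theories of minimal `L`-structures (equivalently, with the maximal
finitely satisfiable sets of quantifier-free `L`-sentences). -/
def SL (L : FirstOrder.Language.{u, v}) : Type (max u v) :=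
  {S : Set L.Sentence // ∃ (M : Type (max u v)) (_ : L.Structure M), L.IsMinimal M ∧ S = L.qf M}

/-- The basic set `U_φ = {S ∈ S_L : φ ∈ S}`. -/
def USet {L : FirstOrder.Language.{u, v}} (φ : L.Sentence) : Set (SL L) :=
  {S : SL L | φ ∈ S.1}

/-- The Stone topology `τ` on `S_L`, with basis `{U_φ : φ ∈ QF(L)}`. -/
instance stoneTopology (L : FirstOrder.Language.{u, v}) : TopologicalSpace (SL L) :=
  TopologicalSpace.generateFrom
    {V : Set (SL L) | ∃ φ : L.Sentence, BoundedFormula.IsQF φ ∧ V = USet φ}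

variable {L : FirstOrder.Language.{u, v}} {M : Type*} {P : Type*} [L.Structure M] [L.Structure P]

/-- QF sentences transfer along embeddings. -/
lemma qf_sentence_embedding (f : M ↪[L] P) {φ : L.Sentence} (h : BoundedFormula.IsQF φ) :
    M ⊨ φ ↔ P ⊨ φ := by
  have := h.realize_embedding f (v := (default : Empty → M)) (xs := (default : Fin 0 → M))
  unfold Sentence.Realize Formula.Realize
  rw [← this]
  exact iff_of_eq (congrArg₂ _ (Subsingleton.elim _ _) (Subsingleton.elim _ _))

/-- term equality sentences are QF -/
lemma isQF_equal (t s : L.Term Empty) : BoundedFormula.IsQF (Term.equal t s) :=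
  (BoundedFormula.IsAtomic.equal _ _).isQF

lemma isQF_rel {n : ℕ} (R : L.Relations n) (ts : Fin n → L.Term Empty) :
    BoundedFormula.IsQF (Relations.formula R ts) :=
  (BoundedFormula.IsAtomic.rel _ _).isQF

lemma realize_equal_sentence (t s : L.Term Empty) :
    M ⊨ Term.equal t s ↔ t.realize (default : Empty → M) = s.realize default :=
  Formula.realize_equal

lemma realize_rel_sentence {n : ℕ} (R : L.Relations n) (ts : Fin n → L.Term Empty) :
    M ⊨ Relations.formula R ts ↔ Structure.RelMap (M := M) R fun i => (ts i).realize (default : Empty → M) :=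
  Formula.realize_rel

/-- If `M` is minimal and every QF sentence true in `M` is true in `P`, then `M` embeds in `P`. -/
lemma embedding_of_qf_le (hM : Substructure.closure L (∅ : Set M) = ⊤)
    (H : ∀ φ : L.Sentence, BoundedFormula.IsQF φ → M ⊨ φ → P ⊨ φ) :
    Nonempty (M ↪[L] P) := by
  -- upgrade H to an iff
  have H' : ∀ φ : L.Sentence, BoundedFormula.IsQF φ → (M ⊨ φ ↔ P ⊨ φ) := by
    intro φ hφ
    refine ⟨H φ hφ, fun hP => ?_⟩
    by_contra hMφ
    exact ((Sentence.realize_not _).1 (H φ.not hφ.not ((Sentence.realize_not _).2 hMφ))) hP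
  have key : ∀ t s : L.Term Empty,
      t.realize (default : Empty → M) = s.realize default ↔
        t.realize (default : Empty → P) = s.realize default := by
    intro t s
    rw [← realize_equal_sentence, ← realize_equal_sentence]
    exact H' _ (isQF_equal t s)
  have hterm : ∀ x : M, ∃ t : L.Term Empty, t.realize (default : Empty → M) = x := by
    intro x
    have hx : x ∈ Substructure.closure L (∅ : Set M) := hM ▸ Substructure.mem_top x
    obtain ⟨t, ht⟩ := Substructure.mem_closure_iff_exists_term.1 hx
    refine ⟨t.relabel (fun y => (Set.notMem_empty _ y.2).elim), ?_⟩
    rw [Term.realize_relabel, ← ht]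
    congr
    funext y
    exact (Set.notMem_empty _ y.2).elim
  choose T hT using hterm
  set g : M → P := fun x => (T x).realize (default : Empty → P) with hg
  have gspec : ∀ (t : L.Term Empty) (x : M), t.realize (default : Empty → M) = x →
      g x = t.realize (default : Empty → P) := by
    intro t x ht
    exact ((key (T x) t).1 (by rw [hT x, ht])).symm ▸ rfl
  have ginj : Function.Injective g := by
    intro x y hxy
    rw [← hT x, ← hT y]
    exact (key (T x) (T y)).2 hxy
  refine ⟨⟨⟨g, ginj⟩, ?_, ?_⟩⟩
  · intro n F xs
    have : ((Term.func F fun i => T (xs i)) : L.Term Empty).realize (default : Empty → M)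
        = Structure.funMap F xs := by
      simp [Term.realize, hT]
    show g (Structure.funMap F xs) = Structure.funMap F (g ∘ xs)
    rw [gspec _ _ this]
    simp only [Term.realize]
    rfl
  · intro n r xs
    have h1 : Structure.RelMap (M := P) r (g ∘ xs) ↔
        P ⊨ Relations.formula r fun i => T (xs i) := by
      rw [realize_rel_sentence]
      exact Iff.rfl
    have h2 : Structure.RelMap (M := M) r xs ↔
        M ⊨ Relations.formula r fun i => T (xs i) := by
      rw [realize_rel_sentence]
      simp [hT]
    rw [h1, h2]
    exact (H' _ (isQF_rel _ _)).symm

lemma mem_closure_iff' {α : Type*} (t : TopologicalSpace α) {s : Set α} {x : α} :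
    x ∈ @closure α t s ↔ ∀ o, @IsOpen α t o → x ∈ o → (o ∩ s).Nonempty := by
  letI := t
  exact _root_.mem_closure_iff

/-- **Proposition 2.9.** For a set `X = {N i : i ∈ ι}` of minimal `L`-structures and a minimal
`L`-structure `M`, the following are equivalent: (1) `qf(M)` belongs to the closure of
`{qf(N) : N ∈ X}` in the Stone topology on `S_L`; (2) `M` is isomorphic to the core
(the substructure generated by the empty set) of an ultraproduct of structures from `X`;
(3) `M` embeds into an ultraproduct of structures from `X`. -/
theorem mem_closure_tfae_ultraproduct (L : FirstOrder.Language.{u, v}) [Nonempty L.Constants]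
    {ι : Type (max u v)} (N : ι → Type (max u v)) [∀ i, L.Structure (N i)]
    (hN : ∀ i, L.IsMinimal (N i))
    (M : Type (max u v)) [iM : L.Structure M] (hM : L.IsMinimal M) :
    List.TFAE
      [(⟨L.qf M, M, iM, hM, rfl⟩ : SL L) ∈ closure {S : SL L | ∃ i, S.1 = L.qf (N i)},
       ∃ (κ : Type (max u v)) (f : κ → ι) (D : Ultrafilter κ),
         Nonempty
           (M ≃[L]
             Substructure.closure L (∅ : Set ((D : Filter κ).Product fun k => N (f k)))),
       ∃ (κ : Type (max u v)) (f : κ → ι) (D : Ultrafilter κ),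
         Nonempty (M ↪[L] (D : Filter κ).Product fun k => N (f k))] := by
  haveI : ∀ i, Nonempty (N i) :=
    fun i => ⟨Structure.funMap (L := L) (Classical.arbitrary L.Constants) default⟩
  tfae_have 2 → 3
  | ⟨κ, f, D, ⟨e⟩⟩ => ⟨κ, f, D,
      ⟨(Substructure.subtype _).comp e.toEmbedding⟩⟩
  tfae_have 3 → 2 := by
    rintro ⟨κ, f, D, ⟨e⟩⟩
    refine ⟨κ, f, D, ?_⟩
    have hr : e.toHom.range =
        Substructure.closure L (∅ : Set ((D : Filter κ).Product fun k => N (f k))) := by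
      rw [Hom.range_eq_map, ← hM, ← Substructure.closure_image, Set.image_empty]
    rw [← hr]
    exact ⟨e.equivRange⟩
  tfae_have 3 → 1 := by
    rintro ⟨κ, f, D, ⟨e⟩⟩
    set P := (D : Filter κ).Product fun k => N (f k) with hP
    have hB := @TopologicalSpace.isTopologicalBasis_of_subbasis (SL L) (stoneTopology L)
      {V : Set (SL L) | ∃ φ : L.Sentence, BoundedFormula.IsQF φ ∧ V = USet φ} rfl
    refine (TopologicalSpace.IsTopologicalBasis.mem_closure_iff hB).2 ?_
    rintro O ⟨F, ⟨hFfin, hFsub⟩, rfl⟩ hxO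
    have hFsub' : ∀ A ∈ F, ∃ φ : L.Sentence, BoundedFormula.IsQF φ ∧ A = USet φ :=
      fun A hA => hFsub hA
    choose! φ hφqf hφeq using hFsub'
    -- each basic set in F is satisfied by P
    have hPsat : ∀ A ∈ F, P ⊨ φ A := by
      intro A hA
      have hxA := Set.mem_sInter.1 hxO A hA
      rw [hφeq A hA] at hxA
      have hMφ : M ⊨ φ A := hxA.2
      exact (qf_sentence_embedding e (hφqf A hA)).1 hMφ
    have hmem : (⋂ A ∈ F, {k : κ | N (f k) ⊨ φ A}) ∈ (D : Filter κ) := by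
      refine (Filter.biInter_mem hFfin).2 fun A hA => ?_
      exact (Ultraproduct.sentence_realize (u := D) (M := fun k => N (f k)) (φ A)).1 (hPsat A hA)
    obtain ⟨k, hk⟩ := Filter.nonempty_of_mem hmem
    simp only [Set.mem_iInter, Set.mem_setOf_eq] at hk
    refine ⟨⟨L.qf (N (f k)), N (f k), inferInstance, hN _, rfl⟩, ?_, ⟨f k, rfl⟩⟩
    refine Set.mem_sInter.2 fun A hA => ?_
    rw [hφeq A hA]
    exact ⟨hφqf A hA, hk A hA⟩
  tfae_have 1 → 3 := by
    intro h1
    -- Claim: every finite subset of qf(M) is realized in some N i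
    have claim : ∀ s : Finset L.Sentence, ↑s ⊆ L.qf M → ∃ i, ∀ φ ∈ s, N i ⊨ φ := by
      intro s hs
      have hopen : @IsOpen (SL L) (stoneTopology L) (⋂ φ ∈ s, USet (L := L) φ) := by
        refine isOpen_biInter_finset fun φ hφ => ?_
        exact TopologicalSpace.isOpen_generateFrom_of_mem ⟨φ, (hs hφ).1, rfl⟩
      have hxmem : (⟨L.qf M, M, iM, hM, rfl⟩ : SL L) ∈ ⋂ φ ∈ s, USet (L := L) φ := by
        refine Set.mem_iInter₂.2 fun φ hφ => ?_
        exact hs hφ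
      obtain ⟨S, hSO, i, hSi⟩ := (mem_closure_iff' (stoneTopology L)).1 h1 _ hopen hxmem
      refine ⟨i, fun φ hφ => ?_⟩
      have h2 : φ ∈ S.val := Set.mem_iInter₂.1 hSO φ hφ
      rw [hSi] at h2
      exact h2.2
    set κ : Type (max u v) := {s : Finset L.Sentence // ↑s ⊆ L.qf M} with hκ
    have claim' : ∀ k : κ, ∃ i, ∀ φ ∈ k.1, N i ⊨ φ := fun k => claim k.1 k.2
    choose f hf using claim'
    set gen : Set (Set κ) := {A | ∃ φ ∈ L.qf M, A = {k : κ | φ ∈ k.1}} with hgen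
    have hNeBot : (Filter.generate gen).NeBot := by
      rw [Filter.generate_neBot_iff]
      intro t hts htfin
      have hts' : ∀ A ∈ t, ∃ φ ∈ L.qf M, A = {k : κ | φ ∈ k.1} := fun A hA => hts hA
      choose! ψ hψmem hψeq using hts'
      have himg : (ψ '' t).Finite := htfin.image _
      have hsub : ↑himg.toFinset ⊆ L.qf M := by
        rw [Set.Finite.coe_toFinset]
        rintro φ ⟨A, hA, rfl⟩
        exact hψmem A hA
      refine ⟨⟨himg.toFinset, hsub⟩, Set.mem_sInter.2 fun A hA => ?_⟩
      rw [hψeq A hA]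
      exact Set.mem_setOf_eq ▸ (Set.Finite.mem_toFinset himg).2 ⟨A, hA, rfl⟩
    haveI := hNeBot
    set D : Ultrafilter κ := Ultrafilter.of (Filter.generate gen) with hD
    refine ⟨κ, f, D, ?_⟩
    apply embedding_of_qf_le hM
    intro φ hφqf hφM
    rw [Ultraproduct.sentence_realize]
    have hAmem : {k : κ | φ ∈ k.1} ∈ (D : Filter κ) := by
      refine Ultrafilter.of_le (Filter.generate gen) ?_
      exact Filter.mem_generate_iff.2 ⟨{{k : κ | φ ∈ k.1}}, Set.singleton_subset_iff.2
        ⟨φ, ⟨hφqf, hφM⟩, rfl⟩, Set.finite_singleton _, by simp⟩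
    exact Filter.mem_of_superset hAmem fun k hk => hf k φ hk
  tfae_finish
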